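/- Let ℓ, ℓ̃ be exponentially concave β-smooth C¹ functions on [0,1] with ℓ(1/2)=ℓ̃(1/2)=0, generating portfolio maps π, π̃ on Δₙ via πᵢ(p) = pᵢ(1 + (1/n)ℓ'(pᵢ) - (1/n)Σⱼ pⱼℓ'(pⱼ)). Then for any u ∈ Δₙ and r ∈ Δₙ, |log((π(u)·r)/(u·r)) - log((π̃(u)·r)/(u·r))| ≤ 2·exp(2√β/n)·d(ℓ,ℓ̃), where d(ℓ,ℓ̃) = max_{x∈[0,1]} |ℓ'(x) - ℓ̃'(x)|. -/

import Mathlib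

open Set

-- derivative of a concave function is antitone (from HasDerivWithinAt data)
lemma my_concave_deriv_anti {f f' : ℝ → ℝ}
    (hc : ConcaveOn ℝ (Icc (0:ℝ) 1) f)
    (hd : ∀ x ∈ Icc (0:ℝ) 1, HasDerivWithinAt f (f' x) (Icc (0:ℝ) 1) x)
    {x y : ℝ} (hx : x ∈ Icc (0:ℝ) 1) (hy : y ∈ Icc (0:ℝ) 1) (hxy : x ≤ y) :
    f' y ≤ f' x := by
  rcases eq_or_lt_of_le hxy with rfl | h
  · exact le_rfl
  · exact le_trans (hc.le_slope_of_hasDerivWithinAt hx hy h (hd y hy))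
      (hc.slope_le_of_hasDerivWithinAt hx hy h (hd x hx))

-- tangent line lies above a concave function
lemma my_concave_tangent {f f' : ℝ → ℝ}
    (hc : ConcaveOn ℝ (Icc (0:ℝ) 1) f)
    (hd : ∀ x ∈ Icc (0:ℝ) 1, HasDerivWithinAt f (f' x) (Icc (0:ℝ) 1) x)
    {x y : ℝ} (hx : x ∈ Icc (0:ℝ) 1) (hy : y ∈ Icc (0:ℝ) 1) :
    f y ≤ f x + f' x * (y - x) := by
  rcases lt_trichotomy x y with h | rfl | h
  · have h1 := hc.slope_le_of_hasDerivWithinAt hx hy h (hd x hx)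
    rw [slope_def_field, div_le_iff₀ (by linarith)] at h1
    linarith
  · simp
  · have h1 := hc.le_slope_of_hasDerivWithinAt hy hx h (hd x hx)
    rw [slope_def_field, le_div_iff₀ (by linarith)] at h1
    nlinarith

-- package of derivative facts for exp ∘ ℓ
lemma my_exp_deriv {ℓ ℓ' : ℝ → ℝ}
    (hd : ∀ x ∈ Icc (0:ℝ) 1, HasDerivWithinAt ℓ (ℓ' x) (Icc (0:ℝ) 1) x) :
    ∀ x ∈ Icc (0:ℝ) 1,
      HasDerivWithinAt (fun t => Real.exp (ℓ t)) (Real.exp (ℓ x) * ℓ' x) (Icc (0:ℝ) 1) x :=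
  fun x hx => (hd x hx).exp

lemma my_deriv_le_sqrt_aux {β : ℝ} (hβ : 0 < β) {ℓ ℓ' : ℝ → ℝ}
    (hd : ∀ x ∈ Icc (0:ℝ) 1, HasDerivWithinAt ℓ (ℓ' x) (Icc (0:ℝ) 1) x)
    (hconc : ConcaveOn ℝ (Icc (0:ℝ) 1) (fun x => Real.exp (ℓ x)))
    (hlip : ∀ x ∈ Icc (0:ℝ) 1, ∀ y ∈ Icc (0:ℝ) 1, |ℓ' x - ℓ' y| ≤ β * |x - y|)
    {x₀ : ℝ} (hx₀ : x₀ ∈ Icc (0:ℝ) 1) (hx₀1 : x₀ < 1) :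
    ℓ' x₀ ≤ Real.sqrt β := by
  by_contra hcon
  push_neg at hcon
  set s := Real.sqrt β with hs
  have hs0 : 0 ≤ s := Real.sqrt_nonneg β
  have hs2 : s ^ 2 = β := Real.sq_sqrt hβ.le
  set c := ℓ' x₀ with hc
  set t := min (1 - x₀) ((c - s) / (2 * β)) with ht
  have ht0 : 0 < t := lt_min (by linarith [hx₀.2]) (div_pos (by linarith) (by linarith))
  have htx : x₀ + t ≤ 1 := by have := min_le_left (1 - x₀) ((c - s) / (2 * β)); linarith
  have hβt : β * t ≤ (c - s) / 2 := by
    have h1 : t ≤ (c - s) / (2 * β) := min_le_right _ _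
    rw [le_div_iff₀ (by linarith : (0:ℝ) < 2 * β)] at h1
    nlinarith
  have hct : s < c - β * t := by
    have : 0 < (c - s) / 2 := by linarith
    linarith
  have hsub : Icc x₀ (x₀ + t) ⊆ Icc (0:ℝ) 1 := fun z hz =>
    ⟨le_trans hx₀.1 hz.1, le_trans hz.2 htx⟩
  have hmem : x₀ + t ∈ Icc (0:ℝ) 1 := hsub ⟨le_add_of_nonneg_right ht0.le, le_rfl⟩
  -- derivative lower bound on the small interval
  have hld : ∀ z ∈ Icc x₀ (x₀ + t), c - β * t ≤ ℓ' z := by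
    intro z hz
    have h1 := (abs_le.mp (hlip x₀ hx₀ z (hsub hz))).2
    have h2 : |x₀ - z| ≤ t := by
      rw [abs_sub_comm, abs_of_nonneg (by linarith [hz.1])]
      linarith [hz.2]
    nlinarith
  -- increment lower bound for ℓ
  have hinc : (c - β * t) * t ≤ ℓ (x₀ + t) - ℓ x₀ := by
    have hCont : ContinuousOn ℓ (Icc x₀ (x₀ + t)) := fun z hz =>
      ((hd z (hsub hz)).continuousWithinAt).mono hsub
    have hDiff : DifferentiableOn ℝ ℓ (interior (Icc x₀ (x₀ + t))) := by
      intro z hz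
      rw [interior_Icc] at hz
      have hz01 : z ∈ Ioo (0:ℝ) 1 := ⟨lt_of_le_of_lt hx₀.1 hz.1, lt_of_lt_of_le hz.2 htx⟩
      have := (hd z (Ioo_subset_Icc_self hz01)).hasDerivAt (Icc_mem_nhds hz01.1 hz01.2)
      exact this.differentiableAt.differentiableWithinAt
    have hge : ∀ z ∈ interior (Icc x₀ (x₀ + t)), c - β * t ≤ deriv ℓ z := by
      intro z hz
      rw [interior_Icc] at hz
      have hz01 : z ∈ Ioo (0:ℝ) 1 := ⟨lt_of_le_of_lt hx₀.1 hz.1, lt_of_lt_of_le hz.2 htx⟩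
      have hder := (hd z (Ioo_subset_Icc_self hz01)).hasDerivAt (Icc_mem_nhds hz01.1 hz01.2)
      rw [hder.deriv]
      exact hld z (Ioo_subset_Icc_self hz)
    have := (convex_Icc x₀ (x₀ + t)).mul_sub_le_image_sub_of_le_deriv hCont hDiff hge
      x₀ ⟨le_rfl, by linarith⟩ (x₀ + t) ⟨by linarith, le_rfl⟩ (by linarith)
    simpa using this
  -- antitone derivative of exp ∘ ℓ
  have hanti := my_concave_deriv_anti hconc (my_exp_deriv hd) hx₀ hmem
    (by linarith : x₀ ≤ x₀ + t)
  -- hanti : exp (ℓ (x₀+t)) * ℓ' (x₀+t) ≤ exp (ℓ x₀) * c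
  have hE0 : (0:ℝ) < Real.exp (ℓ x₀) := Real.exp_pos _
  have hEt : Real.exp (ℓ x₀) * Real.exp ((c - β * t) * t) ≤ Real.exp (ℓ (x₀ + t)) := by
    rw [← Real.exp_add]
    exact Real.exp_le_exp.mpr (by linarith)
  have hldt : c - β * t ≤ ℓ' (x₀ + t) := hld _ ⟨by linarith, le_rfl⟩
  have hkey : (c - β * t) * Real.exp ((c - β * t) * t) ≤ c := by
    have h1 : Real.exp (ℓ (x₀ + t)) * (c - β * t) ≤ Real.exp (ℓ (x₀ + t)) * ℓ' (x₀ + t) :=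
      mul_le_mul_of_nonneg_left hldt (Real.exp_pos _).le
    have h2 : (Real.exp (ℓ x₀) * Real.exp ((c - β * t) * t)) * (c - β * t) ≤
        Real.exp (ℓ (x₀ + t)) * (c - β * t) :=
      mul_le_mul_of_nonneg_right hEt (by linarith)
    have h3 := le_trans h2 (le_trans h1 hanti)
    have := mul_le_mul_of_nonneg_left (le_rfl : c ≤ c) hE0.le
    nlinarith [hE0]
  have hexp1 : 1 + (c - β * t) * t ≤ Real.exp ((c - β * t) * t) := by
    have := Real.add_one_le_exp ((c - β * t) * t)
    linarith
  have ha0 : (0:ℝ) < c - β * t := by linarith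
  have h4 : (c - β * t) * (1 + (c - β * t) * t) ≤ (c - β * t) * Real.exp ((c - β * t) * t) :=
    mul_le_mul_of_nonneg_left hexp1 ha0.le
  -- so (c-βt) + (c-βt)^2 t ≤ c = (c-βt) + βt, hence (c-βt)^2 ≤ β, contradiction with s < c-βt
  have h5 : (c - β * t) ^ 2 * t ≤ β * t := by nlinarith
  have h6 : (c - β * t) ^ 2 ≤ β := le_of_mul_le_mul_right (by linarith) ht0
  nlinarith

lemma my_deriv_le_sqrt {β : ℝ} (hβ : 0 < β) {ℓ ℓ' : ℝ → ℝ}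
    (hd : ∀ x ∈ Icc (0:ℝ) 1, HasDerivWithinAt ℓ (ℓ' x) (Icc (0:ℝ) 1) x)
    (hconc : ConcaveOn ℝ (Icc (0:ℝ) 1) (fun x => Real.exp (ℓ x)))
    (hlip : ∀ x ∈ Icc (0:ℝ) 1, ∀ y ∈ Icc (0:ℝ) 1, |ℓ' x - ℓ' y| ≤ β * |x - y|)
    {x : ℝ} (hx : x ∈ Icc (0:ℝ) 1) : ℓ' x ≤ Real.sqrt β := by
  rcases lt_or_eq_of_le hx.2 with h1 | h1
  · exact my_deriv_le_sqrt_aux hβ hd hconc hlip hx h1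
  · -- x = 1 : approximate from the left
    refine le_of_forall_pos_le_add ?_
    intro ε hε
    set y := max 0 (1 - ε / β) with hy
    have hy0 : 0 ≤ y := le_max_left _ _
    have hy1 : y < 1 := by
      apply max_lt one_pos
      have : 0 < ε / β := div_pos hε hβ
      linarith
    have hyI : y ∈ Icc (0:ℝ) 1 := ⟨hy0, hy1.le⟩
    have h2 : ℓ' y ≤ Real.sqrt β := my_deriv_le_sqrt_aux hβ hd hconc hlip hyI hy1
    have h3 := (abs_le.mp (hlip x hx y hyI)).2
    have h4 : |x - y| ≤ ε / β := by
      have h6 : 1 - ε / β ≤ y := le_max_right _ _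
      rw [h1, abs_of_nonneg (by linarith)]
      linarith
    have h5 : β * |x - y| ≤ ε := by
      rw [← le_div_iff₀' hβ]; exact h4
    linarith

lemma my_refined_upper {β : ℝ} (hβ : 0 < β) {ℓ ℓ' : ℝ → ℝ}
    (hd : ∀ x ∈ Icc (0:ℝ) 1, HasDerivWithinAt ℓ (ℓ' x) (Icc (0:ℝ) 1) x)
    (hconc : ConcaveOn ℝ (Icc (0:ℝ) 1) (fun x => Real.exp (ℓ x)))
    (hlip : ∀ x ∈ Icc (0:ℝ) 1, ∀ y ∈ Icc (0:ℝ) 1, |ℓ' x - ℓ' y| ≤ β * |x - y|)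
    {y : ℝ} (hy : y ∈ Icc (0:ℝ) 1) :
    ℓ' y * (1 + Real.sqrt β * y) ≤ Real.sqrt β := by
  set s := Real.sqrt β with hs
  have hs0 : 0 ≤ s := Real.sqrt_nonneg β
  have hden : 0 < 1 + s * y := by nlinarith [hy.1]
  rcases le_or_gt (ℓ' y) 0 with h | h
  · nlinarith
  · have h0I : (0:ℝ) ∈ Icc (0:ℝ) 1 := ⟨le_rfl, zero_le_one⟩
    have h0 : ℓ' 0 ≤ s := my_deriv_le_sqrt hβ hd hconc hlip h0I
    have hanti := my_concave_deriv_anti hconc (my_exp_deriv hd) h0I hy hy.1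
    -- hanti : exp (ℓ y) * ℓ' y ≤ exp (ℓ 0) * ℓ' 0
    have htan := my_concave_tangent hconc (my_exp_deriv hd) hy h0I
    -- htan : exp (ℓ 0) ≤ exp (ℓ y) + exp (ℓ y) * ℓ' y * (0 - y)
    have hEy : (0:ℝ) < Real.exp (ℓ y) := Real.exp_pos _
    have hE0 : (0:ℝ) < Real.exp (ℓ 0) := Real.exp_pos _
    have h1 : Real.exp (ℓ 0) * ℓ' 0 ≤ Real.exp (ℓ 0) * s :=
      mul_le_mul_of_nonneg_left h0 hE0.le
    have h2 : Real.exp (ℓ y) * ℓ' y ≤ Real.exp (ℓ 0) * s := le_trans hanti h1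
    have h3 : Real.exp (ℓ 0) * s ≤ (Real.exp (ℓ y) + Real.exp (ℓ y) * ℓ' y * (0 - y)) * s :=
      mul_le_mul_of_nonneg_right htan hs0
    have h4 : Real.exp (ℓ y) * ℓ' y ≤ (Real.exp (ℓ y) + Real.exp (ℓ y) * ℓ' y * (0 - y)) * s :=
      le_trans h2 h3
    have h5 : Real.exp (ℓ y) * (ℓ' y * (1 + s * y)) ≤ Real.exp (ℓ y) * s := by ring_nf; nlinarith [h4]
    exact le_of_mul_le_mul_left h5 hEy

lemma my_refined_lower {β : ℝ} (hβ : 0 < β) {ℓ ℓ' : ℝ → ℝ}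
    (hd : ∀ x ∈ Icc (0:ℝ) 1, HasDerivWithinAt ℓ (ℓ' x) (Icc (0:ℝ) 1) x)
    (hconc : ConcaveOn ℝ (Icc (0:ℝ) 1) (fun x => Real.exp (ℓ x)))
    (hlip : ∀ x ∈ Icc (0:ℝ) 1, ∀ y ∈ Icc (0:ℝ) 1, |ℓ' x - ℓ' y| ≤ β * |x - y|)
    {x : ℝ} (hx : x ∈ Icc (0:ℝ) 1) :
    -Real.sqrt β ≤ ℓ' x * (1 + Real.sqrt β * (1 - x)) := by
  have hmem : ∀ z : ℝ, z ∈ Icc (0:ℝ) 1 → (1 - z) ∈ Icc (0:ℝ) 1 := by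
    intro z hz; exact ⟨by linarith [hz.2], by linarith [hz.1]⟩
  have hd' : ∀ z ∈ Icc (0:ℝ) 1,
      HasDerivWithinAt (fun t => ℓ (1 - t)) (-ℓ' (1 - z)) (Icc (0:ℝ) 1) z := by
    intro z hz
    have hinner : HasDerivWithinAt (fun t : ℝ => 1 - t) (-1) (Icc (0:ℝ) 1) z :=
      (hasDerivWithinAt_id z _).const_sub 1
    have := (hd (1 - z) (hmem z hz)).comp z hinner (fun t ht => hmem t ht)
    exact this.congr_deriv (by ring)
  have hconc' : ConcaveOn ℝ (Icc (0:ℝ) 1) (fun t => Real.exp (ℓ (1 - t))) := by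
    refine ⟨convex_Icc 0 1, ?_⟩
    intro p hp q hq a b ha hb hab
    have h2 := hconc.2 (hmem p hp) (hmem q hq) ha hb hab
    simp only [smul_eq_mul] at h2 ⊢
    have heq : a * (1 - p) + b * (1 - q) = 1 - (a * p + b * q) := by linear_combination hab
    rw [heq] at h2
    exact h2
  have hlip' : ∀ p ∈ Icc (0:ℝ) 1, ∀ q ∈ Icc (0:ℝ) 1,
      |(fun t => -ℓ' (1 - t)) p - (fun t => -ℓ' (1 - t)) q| ≤ β * |p - q| := by
    intro p hp q hq
    simp only
    have := hlip (1 - q) (hmem q hq) (1 - p) (hmem p hp)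
    have heq : |(1 - q) - (1 - p)| = |p - q| := by
      rw [show (1 - q) - (1 - p) = p - q by ring]
    rw [heq] at this
    calc |-ℓ' (1 - p) - -ℓ' (1 - q)| = |ℓ' (1 - q) - ℓ' (1 - p)| := by
            rw [show -ℓ' (1 - p) - -ℓ' (1 - q) = ℓ' (1 - q) - ℓ' (1 - p) by ring]
      _ ≤ β * |p - q| := this
  have key := my_refined_upper hβ hd' hconc' hlip' (y := 1 - x) (hmem x hx)
  simp only [show (1:ℝ) - (1 - x) = x by ring] at key
  -- key : -ℓ' x * (1 + √β * (1 - x)) ≤ √β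
  linarith

-- tangent line bound for t ↦ s t/(1+s t)
lemma my_tangent_g {s w t : ℝ} (hs : 0 ≤ s) (hw : 0 ≤ w) (ht : 0 ≤ t) :
    s * t / (1 + s * t) ≤ s * w / (1 + s * w) + s / (1 + s * w) ^ 2 * (t - w) := by
  have h1 : 0 < 1 + s * t := by nlinarith
  have h2 : 0 < 1 + s * w := by nlinarith
  have key : (s * w / (1 + s * w) + s / (1 + s * w) ^ 2 * (t - w)) - s * t / (1 + s * t)
      = s ^ 2 * (t - w) ^ 2 / ((1 + s * w) ^ 2 * (1 + s * t)) := by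
    field_simp
    ring
  have hnn : 0 ≤ s ^ 2 * (t - w) ^ 2 / ((1 + s * w) ^ 2 * (1 + s * t)) := by positivity
  linarith

set_option maxHeartbeats 1000000 in
lemma my_coeff_lower (n : ℕ) (hn : 2 ≤ n) {β : ℝ} (hβ : 0 < β) {ℓ ℓ' : ℝ → ℝ}
    (hd : ∀ x ∈ Icc (0:ℝ) 1, HasDerivWithinAt ℓ (ℓ' x) (Icc (0:ℝ) 1) x)
    (hconc : ConcaveOn ℝ (Icc (0:ℝ) 1) (fun x => Real.exp (ℓ x)))
    (hlip : ∀ x ∈ Icc (0:ℝ) 1, ∀ y ∈ Icc (0:ℝ) 1, |ℓ' x - ℓ' y| ≤ β * |x - y|)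
    (u : Fin n → ℝ) (hu : ∀ i, u i ∈ Ioo (0:ℝ) 1) (hus : ∑ i, u i = 1) (i : Fin n) :
    Real.exp (-(2 * Real.sqrt β / n)) / n ≤
      1 + (1/(n:ℝ)) * ℓ' (u i) - (1/(n:ℝ)) * ∑ j, u j * ℓ' (u j) := by
  set s := Real.sqrt β with hsdef
  have hs0 : 0 ≤ s := Real.sqrt_nonneg β
  set N : ℝ := (n : ℝ) with hNdef
  have hN2 : (2:ℝ) ≤ N := by rw [hNdef]; exact_mod_cast hn
  have hN0 : (0:ℝ) < N := by linarith
  have huI : ∀ j, u j ∈ Icc (0:ℝ) 1 := fun j => Ioo_subset_Icc_self (hu j)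
  set x := u i with hxdef
  set v := 1 - x with hvdef
  have hv0 : 0 < v := by have := (hu i).2; simp only [hvdef]; linarith
  have hv1 : v ≤ 1 := by have := (hu i).1; simp only [hvdef]; linarith
  set w := v / (N - 1) with hwdef
  have hw0 : 0 ≤ w := div_nonneg hv0.le (by linarith)
  have hdenw : 0 < 1 + s * w := by nlinarith
  set E := Finset.univ.erase i with hEdef
  set c1 := s * w / (1 + s * w) with hc1def
  set c2 := s / (1 + s * w) ^ 2 with hc2def
  have hsum_erase : ∑ j ∈ E, u j = 1 - x := by
    rw [hEdef, Finset.sum_erase_eq_sub (Finset.mem_univ i), hus]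
  have hcardR : (E.card : ℝ) = N - 1 := by
    rw [hEdef, Finset.card_erase_of_mem (Finset.mem_univ i), Finset.card_univ,
      Fintype.card_fin, Nat.cast_sub (by omega), Nat.cast_one]
  have hN1 : N - 1 ≠ 0 := ne_of_gt (by linarith : (0:ℝ) < N - 1)
  have hNw : (N - 1) * w = v := by
    rw [hwdef, mul_comm]; exact div_mul_cancel₀ v hN1
  -- per-term bound on the erased sum
  have hterm : ∀ j ∈ E, u j * ℓ' (u j) ≤ c1 + c2 * (u j - w) := by
    intro j _
    have hA := my_refined_upper hβ hd hconc hlip (huI j)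
    have hdj : 0 < 1 + s * u j := by nlinarith [(hu j).1]
    have h1 : u j * ℓ' (u j) ≤ s * u j / (1 + s * u j) := by
      rw [le_div_iff₀ hdj]
      nlinarith [mul_le_mul_of_nonneg_left hA (hu j).1.le]
    exact le_trans h1 (my_tangent_g hs0 hw0 (hu j).1.le)
  have hSsum : ∑ j ∈ E, u j * ℓ' (u j) ≤ (N - 1) * c1 := by
    have h1 := Finset.sum_le_sum hterm
    have h2 : ∑ j ∈ E, (c1 + c2 * (u j - w)) =
        (E.card : ℝ) * c1 + c2 * ((∑ j ∈ E, u j) - E.card * w) := by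
      rw [Finset.sum_add_distrib, Finset.sum_const, nsmul_eq_mul, ← Finset.mul_sum,
        Finset.sum_sub_distrib, Finset.sum_const, nsmul_eq_mul]
    rw [h2, hcardR, hsum_erase, ← hvdef, hNw, sub_self, mul_zero, add_zero] at h1
    exact h1
  -- lower bound on (1-x) ℓ' x
  have hdv : 0 < 1 + s * v := by nlinarith
  have hxl := my_refined_lower hβ hd hconc hlip (huI i)
  have hxl2 : -s / (1 + s * v) ≤ ℓ' x := by
    rw [div_le_iff₀ hdv]
    linarith
  have hvl : -(s * v / (1 + s * v)) ≤ v * ℓ' x := by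
    have := mul_le_mul_of_nonneg_left hxl2 hv0.le
    calc -(s * v / (1 + s * v)) = v * (-s / (1 + s * v)) := by ring
      _ ≤ v * ℓ' x := this
  -- split the full sum
  have hsplit : ∑ j, u j * ℓ' (u j) = x * ℓ' x + ∑ j ∈ E, u j * ℓ' (u j) := by
    have h := Finset.sum_erase_eq_sub (f := fun j => u j * ℓ' (u j)) (Finset.mem_univ i)
    rw [hEdef, h]
    simp only [hxdef]
    ring
  -- key lower bound on ℓ' x - S
  have hkey : -(s * v / (1 + s * v)) - (N - 1) * c1 ≤ ℓ' x - ∑ j, u j * ℓ' (u j) := by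
    rw [hsplit]
    have : ℓ' x - (x * ℓ' x + ∑ j ∈ E, u j * ℓ' (u j))
        = v * ℓ' x - ∑ j ∈ E, u j * ℓ' (u j) := by rw [hvdef]; ring
    rw [this]
    linarith
  -- rewrite (N-1) c1
  have hdenv2 : 0 < (N - 1) + s * v := by nlinarith
  have hc1eq : (N - 1) * c1 = (N - 1) * s * v / ((N - 1) + s * v) := by
    rw [hc1def, hwdef]
    have hN1 : N - 1 ≠ 0 := by linarith
    field_simp
  -- numeric chain
  have hden1s : (0:ℝ) < 1 + s := by linarith
  have hdenN1s : (0:ℝ) < (N - 1) + s := by linarith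
  have hdenN2s : (0:ℝ) < N + 2 * s := by linarith
  have e1 : Real.exp (-(2 * s / N)) ≤ N / (N + 2 * s) := by
    rw [Real.exp_neg]
    have h1 : (N + 2 * s) / N ≤ Real.exp (2 * s / N) := by
      have := Real.add_one_le_exp (2 * s / N)
      have h2 : (N + 2 * s) / N = 2 * s / N + 1 := by field_simp; ring
      linarith
    have h3 : (0:ℝ) < (N + 2 * s) / N := div_pos hdenN2s hN0
    have h4 := inv_anti₀ h3 h1
    rw [inv_div] at h4
    exact h4
  have e2 : N / (N + 2 * s) ≤ (N - 1) ^ 2 / ((N - 1) + s) := by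
    rw [div_le_div_iff₀ hdenN2s hdenN1s]
    nlinarith [mul_nonneg (mul_nonneg hN0.le (by linarith : (0:ℝ) ≤ N - 1))
        (by linarith : (0:ℝ) ≤ N - 2),
      mul_nonneg hs0 (mul_nonneg (by linarith : (0:ℝ) ≤ 2 * N - 1)
        (by linarith : (0:ℝ) ≤ N - 2))]
  have e3 : (N - 1) ^ 2 / ((N - 1) + s) ≤ N - s / (1 + s) - (N - 1) * s / ((N - 1) + s) := by
    have hid : N - s / (1 + s) - (N - 1) * s / ((N - 1) + s)
        = 1 / (1 + s) + (N - 1) ^ 2 / ((N - 1) + s) := by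
      field_simp
      ring
    have : (0:ℝ) < 1 / (1 + s) := by positivity
    linarith
  have e4 : s * v / (1 + s * v) ≤ s / (1 + s) := by
    rw [div_le_div_iff₀ hdv hden1s]
    nlinarith [mul_nonneg (mul_nonneg hs0 hs0) (by linarith : (0:ℝ) ≤ 1 - v)]
  have e5 : (N - 1) * s * v / ((N - 1) + s * v) ≤ (N - 1) * s / ((N - 1) + s) := by
    rw [div_le_div_iff₀ hdenv2 hdenN1s]
    nlinarith [mul_nonneg (mul_nonneg (mul_nonneg (by linarith : (0:ℝ) ≤ N - 1)
      (by linarith : (0:ℝ) ≤ N - 1)) hs0) (by linarith : (0:ℝ) ≤ 1 - v)]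
  -- assemble
  have hfinal : Real.exp (-(2 * s / N)) ≤ N + (ℓ' x - ∑ j, u j * ℓ' (u j)) := by
    have h6 : Real.exp (-(2 * s / N)) ≤ N - s / (1 + s) - (N - 1) * s / ((N - 1) + s) :=
      le_trans e1 (le_trans e2 e3)
    rw [hc1eq] at hkey
    linarith
  have hgoal : 1 + (1/N) * ℓ' x - (1/N) * ∑ j, u j * ℓ' (u j)
      = (N + (ℓ' x - ∑ j, u j * ℓ' (u j))) / N := by
    field_simp
    ring
  rw [hgoal]
  gcongr

theorem log_return_lipschitz_in_generator
    (n : ℕ) (hn : 2 ≤ n)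
    (β : ℝ) (hβ : 0 < β)
    (ℓ ℓ' tℓ tℓ' : ℝ → ℝ)
    (hd : ∀ x ∈ Icc (0:ℝ) 1, HasDerivWithinAt ℓ (ℓ' x) (Icc (0:ℝ) 1) x)
    (htd : ∀ x ∈ Icc (0:ℝ) 1, HasDerivWithinAt tℓ (tℓ' x) (Icc (0:ℝ) 1) x)
    (hℓ'cont : ContinuousOn ℓ' (Icc (0:ℝ) 1))
    (htℓ'cont : ContinuousOn tℓ' (Icc (0:ℝ) 1))
    (hconc : ConcaveOn ℝ (Icc (0:ℝ) 1) (fun x => Real.exp (ℓ x)))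
    (htconc : ConcaveOn ℝ (Icc (0:ℝ) 1) (fun x => Real.exp (tℓ x)))
    (hnorm : ℓ (1/2) = 0) (htnorm : tℓ (1/2) = 0)
    (hlip : ∀ x ∈ Icc (0:ℝ) 1, ∀ y ∈ Icc (0:ℝ) 1, |ℓ' x - ℓ' y| ≤ β * |x - y|)
    (htlip : ∀ x ∈ Icc (0:ℝ) 1, ∀ y ∈ Icc (0:ℝ) 1, |tℓ' x - tℓ' y| ≤ β * |x - y|)
    (u r : Fin n → ℝ)
    (hu : ∀ i, u i ∈ Ioo (0:ℝ) 1) (hus : ∑ i, u i = 1)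
    (hr : ∀ i, r i ∈ Ioo (0:ℝ) 1) (hrs : ∑ i, r i = 1) :
    |Real.log ((∑ i, (u i * (1 + (1/(n:ℝ)) * ℓ' (u i) - (1/(n:ℝ)) * ∑ j, u j * ℓ' (u j))) * r i)
          / (∑ i, u i * r i))
      - Real.log ((∑ i, (u i * (1 + (1/(n:ℝ)) * tℓ' (u i) - (1/(n:ℝ)) * ∑ j, u j * tℓ' (u j))) * r i)
          / (∑ i, u i * r i))|
      ≤ 2 * Real.exp (2 * Real.sqrt β / n) * ⨆ x : Icc (0:ℝ) 1, |ℓ' x - tℓ' x| := by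
  have hs0 : 0 ≤ Real.sqrt β := Real.sqrt_nonneg β
  have hN2 : (2:ℝ) ≤ (n:ℝ) := by exact_mod_cast hn
  have hN0 : (0:ℝ) < (n:ℝ) := by linarith
  -- pointwise bound on |ℓ' - tℓ'|
  have habs : ∀ (m m' : ℝ → ℝ),
      (∀ x ∈ Icc (0:ℝ) 1, HasDerivWithinAt m (m' x) (Icc (0:ℝ) 1) x) →
      ConcaveOn ℝ (Icc (0:ℝ) 1) (fun x => Real.exp (m x)) →
      (∀ x ∈ Icc (0:ℝ) 1, ∀ y ∈ Icc (0:ℝ) 1, |m' x - m' y| ≤ β * |x - y|) →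
      ∀ z ∈ Icc (0:ℝ) 1, |m' z| ≤ Real.sqrt β := by
    intro m m' hmd hmc hml z hz
    rw [abs_le]
    constructor
    · have h1 := my_refined_lower hβ hmd hmc hml hz
      have h2 : 0 ≤ Real.sqrt β * (1 - z) := mul_nonneg hs0 (by linarith [hz.2])
      rcases le_or_gt 0 (m' z) with h | h
      · linarith
      · nlinarith
    · exact my_deriv_le_sqrt hβ hmd hmc hml hz
  have hBdd : BddAbove (Set.range fun x : Icc (0:ℝ) 1 => |ℓ' x - tℓ' x|) := by
    refine ⟨2 * Real.sqrt β, ?_⟩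
    rintro _ ⟨z, rfl⟩
    have h1 := habs ℓ ℓ' hd hconc hlip z z.2
    have h2 := habs tℓ tℓ' htd htconc htlip z z.2
    calc |ℓ' z - tℓ' z| ≤ |ℓ' z| + |tℓ' z| := abs_sub _ _
      _ ≤ 2 * Real.sqrt β := by linarith
  set D := ⨆ x : Icc (0:ℝ) 1, |ℓ' x - tℓ' x| with hD
  have hDle : ∀ z ∈ Icc (0:ℝ) 1, |ℓ' z - tℓ' z| ≤ D := by
    intro z hz
    exact le_ciSup hBdd ⟨z, hz⟩
  have hD0 : 0 ≤ D :=
    le_trans (abs_nonneg _) (hDle 0 ⟨le_rfl, zero_le_one⟩)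
  set B := ∑ i, u i * r i with hB
  have hBpos : 0 < B := Finset.sum_pos
    (fun i _ => mul_pos (hu i).1 (hr i).1) ⟨⟨0, by omega⟩, Finset.mem_univ _⟩
  set κ := Real.exp (-(2 * Real.sqrt β / (n:ℝ))) / (n:ℝ) with hκ
  have hκpos : 0 < κ := by positivity
  set A := ∑ i, (u i * (1 + (1/(n:ℝ)) * ℓ' (u i)
    - (1/(n:ℝ)) * ∑ j, u j * ℓ' (u j))) * r i with hA
  set tA := ∑ i, (u i * (1 + (1/(n:ℝ)) * tℓ' (u i)
    - (1/(n:ℝ)) * ∑ j, u j * tℓ' (u j))) * r i with htA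
  have hlb : ∀ (m m' : ℝ → ℝ),
      (∀ x ∈ Icc (0:ℝ) 1, HasDerivWithinAt m (m' x) (Icc (0:ℝ) 1) x) →
      ConcaveOn ℝ (Icc (0:ℝ) 1) (fun x => Real.exp (m x)) →
      (∀ x ∈ Icc (0:ℝ) 1, ∀ y ∈ Icc (0:ℝ) 1, |m' x - m' y| ≤ β * |x - y|) →
      κ * B ≤ ∑ i, (u i * (1 + (1/(n:ℝ)) * m' (u i)
        - (1/(n:ℝ)) * ∑ j, u j * m' (u j))) * r i := by
    intro m m' hmd hmc hml
    rw [hB, Finset.mul_sum]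
    apply Finset.sum_le_sum
    intro i _
    have hci := my_coeff_lower n hn hβ hmd hmc hml u hu hus i
    rw [← hκ] at hci
    calc κ * (u i * r i) = (u i * κ) * r i := by ring
      _ ≤ (u i * (1 + (1/(n:ℝ)) * m' (u i) - (1/(n:ℝ)) * ∑ j, u j * m' (u j))) * r i :=
        mul_le_mul_of_nonneg_right
          (mul_le_mul_of_nonneg_left hci (hu i).1.le) (hr i).1.le
  have hAlb : κ * B ≤ A := hlb ℓ ℓ' hd hconc hlip
  have htAlb : κ * B ≤ tA := hlb tℓ tℓ' htd htconc htlip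
  have hApos : 0 < A := lt_of_lt_of_le (mul_pos hκpos hBpos) hAlb
  have htApos : 0 < tA := lt_of_lt_of_le (mul_pos hκpos hBpos) htAlb
  -- bound on |S - tS|
  have hST : |(∑ j, u j * ℓ' (u j)) - ∑ j, u j * tℓ' (u j)| ≤ D := by
    rw [← Finset.sum_sub_distrib]
    refine le_trans (Finset.abs_sum_le_sum_abs _ _) ?_
    have h1 : ∀ j ∈ Finset.univ, |u j * ℓ' (u j) - u j * tℓ' (u j)| ≤ u j * D := by
      intro j _
      rw [show u j * ℓ' (u j) - u j * tℓ' (u j) = u j * (ℓ' (u j) - tℓ' (u j)) by ring,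
        abs_mul, abs_of_nonneg (hu j).1.le]
      exact mul_le_mul_of_nonneg_left (hDle (u j) (Ioo_subset_Icc_self (hu j))) (hu j).1.le
    refine le_trans (Finset.sum_le_sum h1) ?_
    rw [← Finset.sum_mul, hus, one_mul]
  -- bound on |A - tA|
  have hAdiff : |A - tA| ≤ (2 * D / (n:ℝ)) * B := by
    have hterm : ∀ i ∈ Finset.univ,
        |(u i * (1 + (1/(n:ℝ)) * ℓ' (u i) - (1/(n:ℝ)) * ∑ j, u j * ℓ' (u j))) * r i
          - (u i * (1 + (1/(n:ℝ)) * tℓ' (u i) - (1/(n:ℝ)) * ∑ j, u j * tℓ' (u j))) * r i|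
          ≤ 2 * D / (n:ℝ) * (u i * r i) := by
      intro i _
      have heq : (u i * (1 + (1/(n:ℝ)) * ℓ' (u i) - (1/(n:ℝ)) * ∑ j, u j * ℓ' (u j))) * r i
        - (u i * (1 + (1/(n:ℝ)) * tℓ' (u i) - (1/(n:ℝ)) * ∑ j, u j * tℓ' (u j))) * r i
        = (u i * r i) * ((1/(n:ℝ)) * ((ℓ' (u i) - tℓ' (u i))
            - ((∑ j, u j * ℓ' (u j)) - ∑ j, u j * tℓ' (u j)))) := by ring
      rw [heq, abs_mul, abs_of_nonneg (mul_pos (hu i).1 (hr i).1).le, abs_mul,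
        abs_of_nonneg (by positivity : (0:ℝ) ≤ 1/(n:ℝ))]
      have h2 : |(ℓ' (u i) - tℓ' (u i)) - ((∑ j, u j * ℓ' (u j)) - ∑ j, u j * tℓ' (u j))|
          ≤ 2 * D := by
        have h3 := hDle (u i) (Ioo_subset_Icc_self (hu i))
        calc |(ℓ' (u i) - tℓ' (u i)) - ((∑ j, u j * ℓ' (u j)) - ∑ j, u j * tℓ' (u j))|
            ≤ |ℓ' (u i) - tℓ' (u i)| + |(∑ j, u j * ℓ' (u j)) - ∑ j, u j * tℓ' (u j)| :=
              abs_sub _ _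
          _ ≤ 2 * D := by linarith
      calc u i * r i * ((1/(n:ℝ)) * |(ℓ' (u i) - tℓ' (u i))
            - ((∑ j, u j * ℓ' (u j)) - ∑ j, u j * tℓ' (u j))|)
          ≤ u i * r i * ((1/(n:ℝ)) * (2 * D)) := by
            refine mul_le_mul_of_nonneg_left ?_ (mul_pos (hu i).1 (hr i).1).le
            exact mul_le_mul_of_nonneg_left h2 (by positivity)
        _ = 2 * D / (n:ℝ) * (u i * r i) := by ring
    calc |A - tA|
        = |∑ i, ((u i * (1 + (1/(n:ℝ)) * ℓ' (u i) - (1/(n:ℝ)) * ∑ j, u j * ℓ' (u j))) * r i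
          - (u i * (1 + (1/(n:ℝ)) * tℓ' (u i) - (1/(n:ℝ)) * ∑ j, u j * tℓ' (u j))) * r i)| := by
          rw [hA, htA, ← Finset.sum_sub_distrib]
      _ ≤ ∑ i, |(u i * (1 + (1/(n:ℝ)) * ℓ' (u i) - (1/(n:ℝ)) * ∑ j, u j * ℓ' (u j))) * r i
          - (u i * (1 + (1/(n:ℝ)) * tℓ' (u i) - (1/(n:ℝ)) * ∑ j, u j * tℓ' (u j))) * r i| :=
          Finset.abs_sum_le_sum_abs _ _
      _ ≤ ∑ i, 2 * D / (n:ℝ) * (u i * r i) := Finset.sum_le_sum hterm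
      _ = (2 * D / (n:ℝ)) * B := by rw [hB, Finset.mul_sum]
  -- log difference bound
  have hlog : |Real.log A - Real.log tA| ≤ |A - tA| / (κ * B) := by
    have hgen : ∀ X Y : ℝ, 0 < X → 0 < Y → κ * B ≤ Y → Y ≤ X →
        Real.log X - Real.log Y ≤ |X - Y| / (κ * B) := by
      intro X Y hX hY hYlb hYX
      have h1 : Real.log X - Real.log Y = Real.log (X / Y) :=
        (Real.log_div hX.ne' hY.ne').symm
      have h2 : Real.log (X / Y) ≤ X / Y - 1 := Real.log_le_sub_one_of_pos (div_pos hX hY)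
      have h3 : X / Y - 1 = (X - Y) / Y := by field_simp
      have h4 : (X - Y) / Y ≤ (X - Y) / (κ * B) := by
        apply div_le_div_of_nonneg_left (by linarith) (mul_pos hκpos hBpos) hYlb
      have h5 : (X - Y) / (κ * B) ≤ |X - Y| / (κ * B) := by
        apply div_le_div_of_nonneg_right ?_ (mul_pos hκpos hBpos).le
        exact le_abs_self _
      linarith
    rcases le_total tA A with hc | hc
    · rw [abs_of_nonneg (sub_nonneg.mpr (Real.log_le_log htApos hc))]
      exact hgen A tA hApos htApos htAlb hc
    · rw [abs_of_nonpos (sub_nonpos.mpr (Real.log_le_log hApos hc)), neg_sub]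
      rw [abs_sub_comm]
      exact hgen tA A htApos hApos hAlb hc
  -- final assembly
  rw [Real.log_div hApos.ne' hBpos.ne', Real.log_div htApos.ne' hBpos.ne']
  have heq2 : Real.log A - Real.log B - (Real.log tA - Real.log B)
      = Real.log A - Real.log tA := by ring
  rw [heq2]
  have hchain : |A - tA| / (κ * B) ≤ ((2 * D / (n:ℝ)) * B) / (κ * B) := by
    apply div_le_div_of_nonneg_right hAdiff (mul_pos hκpos hBpos).le
  have hval : ((2 * D / (n:ℝ)) * B) / (κ * B) = 2 * Real.exp (2 * Real.sqrt β / (n:ℝ)) * D := by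
    rw [hκ, Real.exp_neg]
    field_simp
  calc |Real.log A - Real.log tA| ≤ |A - tA| / (κ * B) := hlog
    _ ≤ ((2 * D / (n:ℝ)) * B) / (κ * B) := hchain
    _ = 2 * Real.exp (2 * Real.sqrt β / (n:ℝ)) * D := hval
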